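/- The trilinear alternating map Ψ₃(a₁,a₂,a₃) = Alt_{A,D} Tr(D₁(a₁)·D₂(a₂)·a₃) is a 3-cocycle on the Lie algebra A with bracket [a,b] = ab - ba; that is, for all x₁, x₂, x₃, x₄ ∈ A, Σ_{1 ≤ i < j ≤ 4} (-1)^{i+j} Ψ₃([x_i,x_j], x₁, …, x̂_i, …, x̂_j, …, x₄) = 0. -/

import Mathlib

/-- The trilinear map `Ψ₃(a₁,a₂,a₃) = Alt_{A,D} Tr(D₁(a₁)·D₂(a₂)·a₃)`. -/
noncomputable def Psi3 {A : Type*} [Ring A] [Algebra ℂ A]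
    (Tr : A →ₗ[ℂ] ℂ) (D₁ D₂ : A →ₗ[ℂ] A) (a₁ a₂ a₃ : A) : ℂ :=
  ∑ σ : Equiv.Perm (Fin 3), ((Equiv.Perm.sign σ : ℤ) : ℂ) *
    (Tr (D₁ (![a₁, a₂, a₃] (σ 0)) * D₂ (![a₁, a₂, a₃] (σ 1)) * ![a₁, a₂, a₃] (σ 2)) -
     Tr (D₂ (![a₁, a₂, a₃] (σ 0)) * D₁ (![a₁, a₂, a₃] (σ 1)) * ![a₁, a₂, a₃] (σ 2)))

theorem Psi3_eq {A : Type*} [Ring A] [Algebra ℂ A]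
    (Tr : A →ₗ[ℂ] ℂ) (D₁ D₂ : A →ₗ[ℂ] A) (a b c : A) :
    Psi3 Tr D₁ D₂ a b c =
      (Tr (D₁ a * D₂ b * c) - Tr (D₂ a * D₁ b * c))
      - (Tr (D₁ b * D₂ a * c) - Tr (D₂ b * D₁ a * c))
      - (Tr (D₁ c * D₂ b * a) - Tr (D₂ c * D₁ b * a))
      - (Tr (D₁ a * D₂ c * b) - Tr (D₂ a * D₁ c * b))
      + (Tr (D₁ b * D₂ c * a) - Tr (D₂ b * D₁ c * a))
      + (Tr (D₁ c * D₂ a * b) - Tr (D₂ c * D₁ a * b)) := by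
  rw [Psi3, show (Finset.univ : Finset (Equiv.Perm (Fin 3))) =
    {Equiv.refl _, Equiv.swap 0 1, Equiv.swap 0 2, Equiv.swap 1 2,
     Equiv.swap 0 1 * Equiv.swap 1 2, Equiv.swap 1 2 * Equiv.swap 0 1} from by decide]
  rw [Finset.sum_insert (by decide), Finset.sum_insert (by decide),
      Finset.sum_insert (by decide), Finset.sum_insert (by decide),
      Finset.sum_insert (by decide), Finset.sum_singleton]
  norm_num [show (![a, b, c] : Fin 3 → A) 2 = c from rfl,
    show ((Equiv.swap 0 1 : Equiv.Perm (Fin 3)) 0) = 1 from by decide,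
    show ((Equiv.swap 0 1 : Equiv.Perm (Fin 3)) 1) = 0 from by decide,
    show ((Equiv.swap 0 1 : Equiv.Perm (Fin 3)) 2) = 2 from by decide,
    show ((Equiv.swap 0 2 : Equiv.Perm (Fin 3)) 0) = 2 from by decide,
    show ((Equiv.swap 0 2 : Equiv.Perm (Fin 3)) 1) = 1 from by decide,
    show ((Equiv.swap 0 2 : Equiv.Perm (Fin 3)) 2) = 0 from by decide,
    show ((Equiv.swap 1 2 : Equiv.Perm (Fin 3)) 0) = 0 from by decide,
    show ((Equiv.swap 1 2 : Equiv.Perm (Fin 3)) 1) = 2 from by decide,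
    show ((Equiv.swap 1 2 : Equiv.Perm (Fin 3)) 2) = 1 from by decide,
    show ((Equiv.swap 0 1 * Equiv.swap 1 2 : Equiv.Perm (Fin 3)) 0) = 1 from by decide,
    show ((Equiv.swap 0 1 * Equiv.swap 1 2 : Equiv.Perm (Fin 3)) 1) = 2 from by decide,
    show ((Equiv.swap 0 1 * Equiv.swap 1 2 : Equiv.Perm (Fin 3)) 2) = 0 from by decide,
    show ((Equiv.swap 1 2 * Equiv.swap 0 1 : Equiv.Perm (Fin 3)) 0) = 2 from by decide,
    show ((Equiv.swap 1 2 * Equiv.swap 0 1 : Equiv.Perm (Fin 3)) 1) = 0 from by decide,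
    show ((Equiv.swap 1 2 * Equiv.swap 0 1 : Equiv.Perm (Fin 3)) 2) = 1 from by decide,
    show (Equiv.Perm.sign (Equiv.refl (Fin 3))) = 1 from by decide,
    show (Equiv.Perm.sign (Equiv.swap (0:Fin 3) 1)) = -1 from by decide,
    show (Equiv.Perm.sign (Equiv.swap (0:Fin 3) 2)) = -1 from by decide,
    show (Equiv.Perm.sign (Equiv.swap (1:Fin 3) 2)) = -1 from by decide,
    show (Equiv.Perm.sign (Equiv.swap (0:Fin 3) 1 * Equiv.swap 1 2)) = 1 from by decide,
    show (Equiv.Perm.sign (Equiv.swap (1:Fin 3) 2 * Equiv.swap 0 1)) = 1 from by decide]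
  ring

theorem stmt_8 {A : Type*} [Ring A] [Algebra ℂ A]
    (Tr : A →ₗ[ℂ] ℂ) (hTr : ∀ x y : A, Tr (x * y) = Tr (y * x))
    (D₁ D₂ : A →ₗ[ℂ] A)
    (hD₁ : ∀ x y : A, D₁ (x * y) = D₁ x * y + x * D₁ y)
    (hD₂ : ∀ x y : A, D₂ (x * y) = D₂ x * y + x * D₂ y)
    (hcomm : ∀ a : A, D₁ (D₂ a) = D₂ (D₁ a))
    (hTD₁ : ∀ a : A, Tr (D₁ a) = 0) (hTD₂ : ∀ a : A, Tr (D₂ a) = 0) :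
    ∀ x₁ x₂ x₃ x₄ : A,
      - Psi3 Tr D₁ D₂ (x₁ * x₂ - x₂ * x₁) x₃ x₄
      + Psi3 Tr D₁ D₂ (x₁ * x₃ - x₃ * x₁) x₂ x₄
      - Psi3 Tr D₁ D₂ (x₁ * x₄ - x₄ * x₁) x₂ x₃
      - Psi3 Tr D₁ D₂ (x₂ * x₃ - x₃ * x₂) x₁ x₄
      + Psi3 Tr D₁ D₂ (x₂ * x₄ - x₄ * x₂) x₁ x₃
      - Psi3 Tr D₁ D₂ (x₃ * x₄ - x₄ * x₃) x₁ x₂ = 0 := by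
  have cyc : ∀ a b c d : A, Tr (a * (b * (c * d))) = Tr (b * (c * (d * a))) := by
    intro a b c d
    rw [hTr]
    congr 1
    noncomm_ring
  have ibp1 : ∀ a b c d : A,
      Tr (D₁ a * (b * (c * d))) + Tr (a * (D₁ b * (c * d)))
      + Tr (a * (b * (D₁ c * d))) + Tr (a * (b * (c * D₁ d))) = 0 := by
    intro a b c d
    have h := hTD₁ (a * (b * (c * d)))
    simp only [hD₁, mul_add, map_add] at h
    linear_combination h
  have ibp2 : ∀ a b c d : A,
      Tr (D₂ a * (b * (c * d))) + Tr (a * (D₂ b * (c * d)))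
      + Tr (a * (b * (D₂ c * d))) + Tr (a * (b * (c * D₂ d))) = 0 := by
    intro a b c d
    have h := hTD₂ (a * (b * (c * d)))
    simp only [hD₂, mul_add, map_add] at h
    linear_combination h
  have cm0 : ∀ x b c d : A, Tr (D₁ (D₂ x) * (b * (c * d))) = Tr (D₂ (D₁ x) * (b * (c * d))) := by
    intro x b c d; rw [hcomm]
  have cm1 : ∀ a x c d : A, Tr (a * (D₁ (D₂ x) * (c * d))) = Tr (a * (D₂ (D₁ x) * (c * d))) := by
    intro a x c d; rw [hcomm]
  have cm2 : ∀ a b x d : A, Tr (a * (b * (D₁ (D₂ x) * d))) = Tr (a * (b * (D₂ (D₁ x) * d))) := by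
    intro a b x d; rw [hcomm]
  have cm3 : ∀ a b c x : A, Tr (a * (b * (c * D₁ (D₂ x)))) = Tr (a * (b * (c * D₂ (D₁ x)))) := by
    intro a b c x; rw [hcomm]
  intro x₁ x₂ x₃ x₄
  simp only [Psi3_eq, map_sub, map_add, hD₁, hD₂, sub_mul, mul_sub, add_mul, mul_add, mul_assoc]
  linear_combination (norm := ring1) (0:ℂ)
    + (cyc (x₂) (D₁ x₁) (D₂ x₃) (x₄))
    - (cyc (x₂) (D₁ x₁) (D₂ x₄) (x₃))
    - (cyc (x₂) (D₂ x₁) (D₁ x₃) (x₄))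
    + (cyc (x₂) (D₂ x₁) (D₁ x₄) (x₃))
    - (cyc (x₂) (D₁ x₃) (D₂ x₁) (x₄))
    + (cyc (x₂) (D₂ x₃) (D₁ x₁) (x₄))
    - (cyc (x₃) (D₁ x₁) (D₂ x₂) (x₄))
    + (cyc (x₃) (D₁ x₁) (D₂ x₄) (x₂))
    + (cyc (x₃) (D₂ x₁) (D₁ x₂) (x₄))
    - (cyc (x₃) (D₂ x₁) (D₁ x₄) (x₂))
    + (cyc (x₃) (D₁ x₂) (D₂ x₁) (x₄))
    + (cyc (D₁ x₂) (D₂ x₁) (x₄) (x₃))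
    - (cyc (x₃) (D₂ x₂) (D₁ x₁) (x₄))
    - (cyc (D₂ x₂) (D₁ x₁) (x₄) (x₃))
    - (cyc (D₁ x₃) (D₂ x₁) (x₄) (x₂))
    + (cyc (D₂ x₃) (D₁ x₁) (x₄) (x₂))
    - (ibp2 (x₁) (D₁ x₂) (x₃) (x₄))
    + (cyc (D₂ x₁) (D₁ x₂) (x₃) (x₄))
    + (cyc (D₁ x₂) (x₃) (x₄) (D₂ x₁))
    + (cyc (x₃) (x₄) (D₂ x₁) (D₁ x₂))
    + (ibp1 (x₁) (D₂ x₂) (x₃) (x₄))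
    - (cyc (D₁ x₁) (D₂ x₂) (x₃) (x₄))
    - (cyc (D₂ x₂) (x₃) (x₄) (D₁ x₁))
    - (cyc (x₃) (x₄) (D₁ x₁) (D₂ x₂))
    - (cm1 (x₁) (x₂) (x₃) (x₄))
    + (ibp2 (x₁) (D₁ x₃) (x₂) (x₄))
    - (cyc (D₂ x₁) (D₁ x₃) (x₂) (x₄))
    - (cyc (D₁ x₃) (x₂) (x₄) (D₂ x₁))
    - (cyc (x₂) (x₄) (D₂ x₁) (D₁ x₃))
    - (ibp1 (x₁) (D₂ x₃) (x₂) (x₄))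
    + (cyc (D₁ x₁) (D₂ x₃) (x₂) (x₄))
    + (cyc (D₂ x₃) (x₂) (x₄) (D₁ x₁))
    + (cyc (x₂) (x₄) (D₁ x₁) (D₂ x₃))
    + (cm1 (x₁) (x₃) (x₂) (x₄))
    - (ibp2 (x₁) (D₁ x₃) (x₄) (x₂))
    + (ibp1 (x₁) (D₂ x₃) (x₄) (x₂))
    - (cm1 (x₁) (x₃) (x₄) (x₂))
    - (ibp2 (x₁) (x₄) (x₂) (D₁ x₃))
    + (cyc (x₁) (x₄) (D₂ x₂) (D₁ x₃))
    + (ibp1 (x₁) (x₄) (x₂) (D₂ x₃))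
    - (cyc (x₁) (x₄) (D₁ x₂) (D₂ x₃))
    - (cm3 (x₁) (x₄) (x₂) (x₃))
    - (ibp2 (x₁) (x₃) (x₄) (D₁ x₂))
    + (cyc (x₁) (x₃) (D₂ x₄) (D₁ x₂))
    + (cyc (D₂ x₁) (x₃) (x₄) (D₁ x₂))
    + (cyc (x₃) (x₄) (D₁ x₂) (D₂ x₁))
    + (ibp1 (x₁) (x₃) (x₄) (D₂ x₂))
    - (cyc (x₁) (x₃) (D₁ x₄) (D₂ x₂))
    - (cyc (D₁ x₁) (x₃) (x₄) (D₂ x₂))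
    - (cyc (x₃) (x₄) (D₂ x₂) (D₁ x₁))
    - (cm3 (x₁) (x₃) (x₄) (x₂))
    + (ibp2 (x₁) (D₁ x₂) (x₄) (x₃))
    - (ibp1 (x₁) (D₂ x₂) (x₄) (x₃))
    + (cm1 (x₁) (x₂) (x₄) (x₃))
    + (ibp2 (x₁) (x₄) (x₃) (D₁ x₂))
    - (cyc (x₁) (x₄) (D₂ x₃) (D₁ x₂))
    - (ibp1 (x₁) (x₄) (x₃) (D₂ x₂))
    + (cyc (x₁) (x₄) (D₁ x₃) (D₂ x₂))
    + (cm3 (x₁) (x₄) (x₃) (x₂))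
    + (ibp2 (x₁) (x₂) (x₄) (D₁ x₃))
    - (cyc (x₁) (x₂) (D₂ x₄) (D₁ x₃))
    - (cyc (D₂ x₁) (x₂) (x₄) (D₁ x₃))
    - (cyc (x₂) (x₄) (D₁ x₃) (D₂ x₁))
    - (ibp1 (x₁) (x₂) (x₄) (D₂ x₃))
    + (cyc (x₁) (x₂) (D₁ x₄) (D₂ x₃))
    + (cyc (D₁ x₁) (x₂) (x₄) (D₂ x₃))
    + (cyc (x₂) (x₄) (D₂ x₃) (D₁ x₁))
    + (cm3 (x₁) (x₂) (x₄) (x₃))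
    - (ibp2 (x₁) (x₂) (x₃) (D₁ x₄))
    + (cyc (x₁) (x₂) (D₂ x₃) (D₁ x₄))
    + (cyc (D₂ x₁) (x₂) (x₃) (D₁ x₄))
    + (cyc (x₂) (x₃) (D₁ x₄) (D₂ x₁))
    + (ibp2 (x₁) (x₃) (x₂) (D₁ x₄))
    - (cyc (x₁) (x₃) (D₂ x₂) (D₁ x₄))
    - (cyc (D₂ x₁) (x₃) (x₂) (D₁ x₄))
    - (cyc (x₃) (x₂) (D₁ x₄) (D₂ x₁))
    - (ibp2 (x₁) (D₁ x₄) (x₂) (x₃))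
    + (ibp2 (x₁) (D₁ x₄) (x₃) (x₂))
    + (ibp1 (x₁) (x₂) (x₃) (D₂ x₄))
    - (cyc (x₁) (x₂) (D₁ x₃) (D₂ x₄))
    - (cyc (D₁ x₁) (x₂) (x₃) (D₂ x₄))
    - (cyc (x₂) (x₃) (D₂ x₄) (D₁ x₁))
    - (ibp1 (x₁) (x₃) (x₂) (D₂ x₄))
    + (cyc (x₁) (x₃) (D₁ x₂) (D₂ x₄))
    + (cyc (D₁ x₁) (x₃) (x₂) (D₂ x₄))
    + (cyc (x₃) (x₂) (D₂ x₄) (D₁ x₁))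
    + (ibp1 (x₁) (D₂ x₄) (x₂) (x₃))
    - (ibp1 (x₁) (D₂ x₄) (x₃) (x₂))
    - (cm3 (x₁) (x₂) (x₃) (x₄))
    + (cm3 (x₁) (x₃) (x₂) (x₄))
    - (cm1 (x₁) (x₄) (x₂) (x₃))
    + (cm1 (x₁) (x₄) (x₃) (x₂))
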